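/- Under the standing integrability assumptions, if f(·,s) is differentiable at x for μ-almost every s and F(x) = ∫ f(x,s) μ(ds) is differentiable at x, then grad F(x) = ∫ grad f(x,s) 𝟙_{Δ_f}(x,s) μ(ds), i.e. the Riemannian gradient of the expectation equals the expectation of the Riemannian gradient. -/

import Mathlib

open MeasureTheory Set

/-- Exchange of gradient and expectation: if `f(·,s)` is differentiable at `x` for
`μ`-a.e. `s` with gradient `g s`, the difference quotients are dominated by an
integrable Lipschitz modulus `κ`, and `F = ∫ f(·,s) μ(ds)` is differentiable at `x`
with gradient `G`, then `G = ∫ g dμ`. -/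
theorem stmt14 {E : Type*} [NormedAddCommGroup E] [InnerProductSpace ℝ E]
    [CompleteSpace E]
    {Ω : Type*} [MeasurableSpace Ω] (μ : Measure Ω) [IsProbabilityMeasure μ]
    (f : E → Ω → ℝ) (κ : Ω → ℝ) (g : Ω → E) (G : E) (x : E)
    (hfint : ∀ y, Integrable (f y) μ)
    (hκint : Integrable κ μ)
    (hκpos : ∀ s, 0 ≤ κ s)
    (hlip : ∃ ε > (0:ℝ), ∀ y ∈ Metric.ball x ε, ∀ z ∈ Metric.ball x ε,
      ∀ s, |f y s - f z s| ≤ κ s * dist y z)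
    (hgmeas : Integrable g μ)
    (hgrad : ∀ᵐ s ∂μ, HasGradientAt (fun y => f y s) (g s) x)
    (hF : HasGradientAt (fun y => ∫ s, f y s ∂μ) G x) :
    G = ∫ s, g s ∂μ := by
  obtain ⟨ε, εpos, hl⟩ := hlip
  set T : E →L[ℝ] (E →L[ℝ] ℝ) :=
    (InnerProductSpace.toDual ℝ E).toLinearIsometry.toContinuousLinearMap with hT
  have key := hasFDerivAt_integral_of_dominated_loc_of_lip'
    (F := fun y s => f y s) (F' := fun s => T (g s)) (μ := μ) (bound := κ) (Metric.ball_mem_nhds x εpos)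
    (fun y _ => (hfint y).aestronglyMeasurable) (hfint x)
    (T.continuous.comp_aestronglyMeasurable hgmeas.aestronglyMeasurable)
    (Filter.Eventually.of_forall fun s y hy => by
      have := hl y hy x (Metric.mem_ball_self εpos) s
      simpa [Real.norm_eq_abs, dist_eq_norm] using this)
    hκint
    (hgrad.mono fun s hs => by
      exact hasGradientAt_iff_hasFDerivAt.mp hs)
  have h2 : HasFDerivAt (fun y => ∫ s, f y s ∂μ) (InnerProductSpace.toDual ℝ E G) x :=
    hasGradientAt_iff_hasFDerivAt.mp hF
  have huniq : (InnerProductSpace.toDual ℝ E G : E →L[ℝ] ℝ) = ∫ s, T (g s) ∂μ :=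
    h2.unique key.2
  have hcomm : ∫ s, T (g s) ∂μ = T (∫ s, g s ∂μ) :=
    (T.integral_comp_comm hgmeas).symm ▸ rfl
  have : (InnerProductSpace.toDual ℝ E) G = (InnerProductSpace.toDual ℝ E) (∫ s, g s ∂μ) := by
    rw [huniq, hcomm]; rfl
  exact (InnerProductSpace.toDual ℝ E).injective this
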